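/- For any costs 0 < t_1 ≤ t_2 ≤ ⋯ ≤ t_n, there exists an index l with 1 ≤ l ≤ n such that p_k^K ≥ p_k^P for all k ≤ l and p_k^K < p_k^P for all k > l. -/

import Mathlib

open MeasureTheory Finset

/-- Allocation probability of mechanism K for machine `k`, on sorted costs with `t 0` minimal:
`p_k^K = (1/t_k) · ∫_0^{t_1} ∏_{i ≠ k} (1 − x/t_i) dx`. -/
noncomputable def pK {n : ℕ} [NeZero n] (t : Fin n → ℝ) (k : Fin n) : ℝ :=
  (1 / t k) * ∫ x in (0:ℝ)..(t 0), ∏ i ∈ univ.erase k, (1 - x / t i)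

/-- Allocation probability of mechanism P for machine `k`:
`p_k^P = (1/t_k) / (∑_i 1/t_i)`. -/
noncomputable def pP {n : ℕ} (t : Fin n → ℝ) (k : Fin n) : ℝ :=
  (1 / t k) / (∑ i, 1 / t i)

namespace MechAux

variable {n : ℕ} [NeZero n] (t : Fin n → ℝ)

noncomputable def I (k : Fin n) : ℝ :=
  ∫ x in (0:ℝ)..(t 0), ∏ i ∈ univ.erase k, (1 - x / t i)

lemma contProd (s : Finset (Fin n)) :
    Continuous fun x : ℝ => ∏ i ∈ s, (1 - x / t i) :=
  continuous_finset_prod _ fun i _ => continuous_const.sub (continuous_id.div_const _)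

lemma sum_pK (hpos : 0 < t 0) (hmono : Monotone t) : ∑ k, pK t k = 1 := by
  have ht : ∀ i, 0 < t i := fun i => lt_of_lt_of_le hpos (hmono (Fin.zero_le i))
  have hint : ∀ k : Fin n, pK t k
      = ∫ x in (0:ℝ)..(t 0), (1 / t k) * ∏ i ∈ univ.erase k, (1 - x / t i) := by
    intro k
    rw [pK, ← intervalIntegral.integral_const_mul]
  have hsum : ∑ k, pK t k
      = ∫ x in (0:ℝ)..(t 0), ∑ k : Fin n, (1 / t k) * ∏ i ∈ univ.erase k, (1 - x / t i) := by
    simp_rw [hint]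
    rw [intervalIntegral.integral_finset_sum]
    intro k _
    exact (continuous_const.mul (contProd t _)).intervalIntegrable _ _
  rw [hsum]
  have hderiv : ∀ x : ℝ, HasDerivAt (fun y : ℝ => 1 - ∏ i : Fin n, (1 - y / t i))
      (∑ k : Fin n, (1 / t k) * ∏ i ∈ univ.erase k, (1 - x / t i)) x := by
    intro x
    have h1 : ∀ i ∈ (univ : Finset (Fin n)), HasDerivAt (fun y : ℝ => 1 - y / t i)
        (-(1 / t i)) x := by
      intro i _
      simpa [one_div] using ((hasDerivAt_id x).div_const (t i)).const_sub 1
    have := (HasDerivAt.fun_finsetProd h1).const_sub 1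
    refine this.congr_deriv ?_
    simp [smul_eq_mul, mul_comm]
  have hii : IntervalIntegrable (fun x : ℝ =>
      ∑ k : Fin n, (1 / t k) * ∏ i ∈ univ.erase k, (1 - x / t i)) volume 0 (t 0) := by
    apply Continuous.intervalIntegrable
    exact continuous_finset_sum _ fun k _ => continuous_const.mul (contProd t _)
  have hmain := intervalIntegral.integral_eq_sub_of_hasDerivAt (f := fun y : ℝ =>
      1 - ∏ i : Fin n, (1 - y / t i)) (fun x _ => hderiv x) hii
  rw [hmain]
  have h0 : ∏ i : Fin n, (1 - t 0 / t i) = 0 := by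
    apply Finset.prod_eq_zero (Finset.mem_univ (0 : Fin n))
    field_simp
    simp
  simp [h0]

lemma I_anti (hpos : 0 < t 0) (hmono : Monotone t) {j k : Fin n} (hjk : j ≤ k) :
    I t k ≤ I t j := by
  have ht : ∀ i, 0 < t i := fun i => lt_of_lt_of_le hpos (hmono (Fin.zero_le i))
  rcases eq_or_lt_of_le hjk with rfl | hlt
  · exact le_rfl
  · apply intervalIntegral.integral_mono_on hpos.le
      ((contProd t _).intervalIntegrable _ _) ((contProd t _).intervalIntegrable _ _)
    intro x hx
    obtain ⟨hx0, hx1⟩ := hx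
    have hne : j ≠ k := ne_of_lt hlt
    have hfnonneg : ∀ i : Fin n, 0 ≤ 1 - x / t i := by
      intro i
      have : x / t i ≤ 1 := by
        rw [div_le_one (ht i)]
        exact le_trans hx1 (hmono (Fin.zero_le i))
      linarith
    have hkj : k ∈ univ.erase j := Finset.mem_erase.2 ⟨hne.symm, Finset.mem_univ _⟩
    have hjk' : j ∈ univ.erase k := Finset.mem_erase.2 ⟨hne, Finset.mem_univ _⟩
    rw [← Finset.mul_prod_erase _ _ hkj, ← Finset.mul_prod_erase _ _ hjk',
      Finset.erase_right_comm]
    apply mul_le_mul_of_nonneg_right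
    · have : x / t k ≤ x / t j := by
        apply div_le_div_of_nonneg_left hx0 (ht j) (hmono hlt.le)
      linarith
    · exact Finset.prod_nonneg fun i _ => hfnonneg i

end MechAux

/-- For sorted costs `0 < t 0 ≤ ⋯ ≤ t (n-1)` (with `n ≥ 2`), there exists a
threshold index `l` such that `p_k^K ≥ p_k^P` for all `k ≤ l` and `p_k^K < p_k^P` for `k > l`. -/
theorem mechanismK_mechanismP_threshold
    (n : ℕ) [NeZero n] (hn : 2 ≤ n) (t : Fin n → ℝ)
    (hpos : 0 < t 0) (hmono : Monotone t) :
    ∃ l : Fin n, (∀ k : Fin n, k ≤ l → pK t k ≥ pP t k) ∧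
      (∀ k : Fin n, l < k → pK t k < pP t k) := by
  classical
  have ht : ∀ i, 0 < t i := fun i => lt_of_lt_of_le hpos (hmono (Fin.zero_le i))
  set S : ℝ := ∑ i, 1 / t i with hS
  have hSpos : 0 < S := Finset.sum_pos (fun i _ => by have := ht i; positivity) ⟨0, Finset.mem_univ _⟩
  have hpKdef : ∀ k : Fin n, pK t k = (1 / t k) * MechAux.I t k := fun k => rfl
  have hpPdef : ∀ k : Fin n, pP t k = (1 / t k) * (1 / S) := fun k => by
    rw [pP, ← hS, div_eq_mul_one_div]
  -- the zeroth integral is at least 1/S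
  have h0 : 1 / S ≤ MechAux.I t 0 := by
    by_contra h
    push_neg at h
    have hall : ∀ k : Fin n, MechAux.I t k < 1 / S := fun k =>
      lt_of_le_of_lt (MechAux.I_anti t hpos hmono (Fin.zero_le k)) h
    have hlt : ∑ k, pK t k < ∑ k : Fin n, (1 / t k) * (1 / S) := by
      apply Finset.sum_lt_sum_of_nonempty ⟨0, Finset.mem_univ _⟩
      intro k _
      rw [hpKdef]
      exact mul_lt_mul_of_pos_left (hall k) (by have := ht k; positivity)
    rw [MechAux.sum_pK t hpos hmono] at hlt
    have : ∑ k : Fin n, (1 / t k) * (1 / S) = 1 := by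
      rw [← Finset.sum_mul, ← hS, mul_one_div, div_self (ne_of_gt hSpos)]
    rw [this] at hlt
    exact lt_irrefl 1 hlt
  set A : Finset (Fin n) := univ.filter (fun k => 1 / S ≤ MechAux.I t k) with hA
  have hAne : A.Nonempty := ⟨0, Finset.mem_filter.2 ⟨Finset.mem_univ _, h0⟩⟩
  refine ⟨A.max' hAne, ?_, ?_⟩
  · intro k hk
    have hl : A.max' hAne ∈ A := A.max'_mem hAne
    have hI : 1 / S ≤ MechAux.I t (A.max' hAne) := (Finset.mem_filter.1 hl).2
    have : 1 / S ≤ MechAux.I t k :=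
      le_trans hI (MechAux.I_anti t hpos hmono hk)
    rw [hpKdef, hpPdef]
    exact mul_le_mul_of_nonneg_left this (by have := ht k; positivity)
  · intro k hk
    have hkA : k ∉ A := by
      intro hmem
      exact absurd (A.le_max' k hmem) (not_le.2 hk)
    have : MechAux.I t k < 1 / S := by
      by_contra h
      push_neg at h
      exact hkA (Finset.mem_filter.2 ⟨Finset.mem_univ _, h⟩)
    rw [hpKdef, hpPdef]
    exact mul_lt_mul_of_pos_left this (by have := ht k; positivity)
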